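/- The WT allocation is weighted max-min fair with weights ρ: if q is the WT-achieved vector and q′ is any feasible vector with q′_i > q_i for some i, then there exists j with q′_j < q_j and w_i(q_i)/ρ_i ≥ w_j(q_j)/ρ_j, where w_n(x) = x/p_n. -/

import Mathlib

open Finset

/-- Theorem 6: the WT policy is weighted max-min fair with weights `ρ`.  Let `q` be
the WT-achieved vector (`q n = τ p n θ k ρ n` on the layer `H k \ H (k-1)`, with
`∑_{n ∈ H k} q n / p n = τ - I (H k)` for every `k`).  If `q'` is any feasible
vector with `q' i > q i` for some `i`, then there is a client `j` with `q' j < q j`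
and `w_i(q_i)/ρ_i ≥ w_j(q_j)/ρ_j`, where `w_n(x) = x / p n`. -/
theorem stmt_13 (N : ℕ) (τ : ℝ) (hτ : 0 < τ) (p ρ : Fin N → ℝ)
    (hp : ∀ n, 0 < p n ∧ p n ≤ 1) (hρ : ∀ n, 0 < ρ n)
    (I : Finset (Fin N) → ℝ)
    (K : ℕ) (H : ℕ → Finset (Fin N)) (θ : ℕ → ℝ)
    (hH0 : H 0 = ∅) (hHK : H K = Finset.univ)
    (hchain : ∀ k, 1 ≤ k → k ≤ K → H (k-1) ⊂ H k)
    (hθ1 : 0 < θ 1)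
    (hθmono : ∀ k j, 1 ≤ k → k < j → j ≤ K → θ k < θ j)
    (q : Fin N → ℝ)
    (hq : ∀ k, 1 ≤ k → k ≤ K → ∀ n ∈ H k \ H (k-1), q n = τ * p n * θ k * ρ n)
    (hlayer : ∀ k, 1 ≤ k → k ≤ K → ∑ n ∈ H k, q n / p n = τ - I (H k))
    (q' : Fin N → ℝ) (hq'0 : ∀ n, 0 ≤ q' n)
    (hq'feas : ∀ S : Finset (Fin N), ∑ n ∈ S, q' n / p n ≤ τ - I S)
    (i : Fin N) (hi : q i < q' i) :
    ∃ j, q' j < q j ∧ (q j / p j) / ρ j ≤ (q i / p i) / ρ i := by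
  -- monotonicity of H
  have hmono : ∀ a b : ℕ, a ≤ b → b ≤ K → H a ⊆ H b := by
    intro a b hab hbK
    induction b with
    | zero => simp_all
    | succ m ih =>
      rcases Nat.lt_or_ge a (m+1) with h | h
      · have h1 : H m ⊆ H (m+1) := by
          have := hchain (m+1) (Nat.le_add_left 1 m) hbK
          simpa using this.subset
        exact (ih (Nat.lt_succ_iff.mp h) (le_of_lt hbK)).trans h1
      · have : a = m + 1 := le_antisymm hab h
        subst this; exact subset_rfl
  -- every member of H k lies in some layer m ≤ k
  have hlay : ∀ (n : Fin N) (k : ℕ), k ≤ K → n ∈ H k →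
      ∃ m, 1 ≤ m ∧ m ≤ k ∧ n ∈ H m \ H (m-1) := by
    intro n k hk hn
    have hex : ∃ m, n ∈ H m := ⟨k, hn⟩
    classical
    let m := Nat.find hex
    have hmem : n ∈ H m := Nat.find_spec hex
    have hmk : m ≤ k := Nat.find_le hn
    have hm1 : 1 ≤ m := by
      rcases Nat.eq_zero_or_pos m with h0 | h0
      · exfalso; rw [h0, hH0] at hmem; simp at hmem
      · exact h0
    have hnot : n ∉ H (m-1) := Nat.find_min hex (by omega)
    exact ⟨m, hm1, hmk, Finset.mem_sdiff.mpr ⟨hmem, hnot⟩⟩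
  -- i's layer
  have hiK : i ∈ H K := by rw [hHK]; exact Finset.mem_univ i
  obtain ⟨k, hk1, hkK, hik⟩ := hlay i K (le_refl K) hiK
  have hiHk : i ∈ H k := (Finset.mem_sdiff.mp hik).1
  -- there is j ∈ H k with q' j < q j
  have hsum : ∑ n ∈ H k, q' n / p n ≤ ∑ n ∈ H k, q n / p n := by
    rw [hlayer k hk1 hkK]; exact hq'feas (H k)
  have hstrict : q i / p i < q' i / p i :=
    div_lt_div_of_pos_right hi (hp i).1
  by_cases hall : ∀ n ∈ H k, q n ≤ q' n
  · exfalso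
    have : ∑ n ∈ H k, q n / p n < ∑ n ∈ H k, q' n / p n := by
      apply Finset.sum_lt_sum
      · intro n hn
        exact div_le_div_of_nonneg_right (hall n hn) (hp n).1.le
      · exact ⟨i, hiHk, hstrict⟩
    linarith
  · push_neg at hall
    obtain ⟨j, hjHk, hj⟩ := hall
    obtain ⟨m, hm1, hmk, hjm⟩ := hlay j k hkK hjHk
    refine ⟨j, hj, ?_⟩
    have hqj := hq m hm1 (hmk.trans hkK) j hjm
    have hqi := hq k hk1 hkK i hik
    have hvj : (q j / p j) / ρ j = τ * θ m := by
      have := (hp j).1.ne'; have := (hρ j).ne'; rw [hqj]; field_simp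
    have hvi : (q i / p i) / ρ i = τ * θ k := by
      have := (hp i).1.ne'; have := (hρ i).ne'; rw [hqi]; field_simp
    rw [hvj, hvi]
    rcases eq_or_lt_of_le hmk with h | h
    · rw [h]
    · have := hθmono m k hm1 h hkK
      nlinarith
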